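/- arXiv:2404.13389 — 4 statements merged into one kernel-verified Lean document; each statement's English description precedes it below -/
import Mathlib

section
/- Let $H$ be a graph with independence number $\alpha_H$, and set $\gamma_H = |V(H)| - \alpha_H - 1$. Then the book $B_{\gamma_H, n - \gamma_H}$ contains no $H$ minor, for every $n \geq |V(H)|$. -/
/-- `G` contains `H` as a minor. -/
def SimpleGraph.HasMinor {V : Type*} {W : Type*} (G : SimpleGraph V) (H : SimpleGraph W) :
    Prop :=
  ∃ f : W → Set V,
    (∀ w, (f w).Nonempty) ∧
    (∀ w, (G.induce (f w)).Connected) ∧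
    (Pairwise fun w₁ w₂ => Disjoint (f w₁) (f w₂)) ∧
    (∀ ⦃w₁ w₂⦄, H.Adj w₁ w₂ → ∃ v₁ ∈ f w₁, ∃ v₂ ∈ f w₂, G.Adj v₁ v₂)

/-- The book graph `B_{s,t}`: the join of a clique on `s` vertices with an independent set
of `t` vertices. -/
def book (s t : ℕ) : SimpleGraph (Fin s ⊕ Fin t) where
  Adj a b := a ≠ b ∧ (a.isLeft ∨ b.isLeft)
  symm := ⟨by rintro a b ⟨h1, h2⟩; exact ⟨h1.symm, h2.symm⟩⟩
  loopless := ⟨by rintro a ⟨h, _⟩; exact h rfl⟩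

/-- The independence number of a finite graph. -/
noncomputable def SimpleGraph.indepNumFin {W : Type*} [Fintype W] (H : SimpleGraph W) : ℕ :=
  sSup {n : ℕ | ∃ s : Finset W, s.card = n ∧ ∀ a ∈ s, ∀ b ∈ s, ¬ H.Adj a b}

/-- With `γ_H = |V(H)| - α_H - 1`, the book `B_{γ_H, n - γ_H}` contains
no `H` minor, for every `n ≥ |V(H)|`. -/
theorem book_minorFree {W : Type*} [Fintype W] (H : SimpleGraph W) (γ n : ℕ)
    (hγ : γ + H.indepNumFin + 1 = Fintype.card W) (hn : Fintype.card W ≤ n) :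
    ¬ (book γ (n - γ)).HasMinor H := by
  classical
  rintro ⟨f, hne, hconn, hdisj, hadj⟩
  -- S : vertices whose branch set avoids the left (clique) part
  set S : Finset W := Finset.univ.filter (fun w => ∀ v ∈ f w, v.isRight) with hS
  -- S is an independent set in H
  have hindep : ∀ a ∈ S, ∀ b ∈ S, ¬ H.Adj a b := by
    intro a ha b hb hAB
    obtain ⟨v₁, hv₁, v₂, hv₂, hadj'⟩ := hadj hAB
    have h₁ := (Finset.mem_filter.mp ha).2 v₁ hv₁
    have h₂ := (Finset.mem_filter.mp hb).2 v₂ hv₂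
    rcases hadj'.2 with h | h
    · rw [Sum.isRight_iff] at h₁; obtain ⟨x, rfl⟩ := h₁; simp at h
    · rw [Sum.isRight_iff] at h₂; obtain ⟨x, rfl⟩ := h₂; simp at h
  -- complement of S has at most γ elements
  have hcomp : Sᶜ.card ≤ γ := by
    have key : ∀ w : {w // w ∈ Sᶜ}, ∃ x : Fin γ, Sum.inl x ∈ f (w : W) := by
      rintro ⟨w, hw⟩
      simp only [hS, Finset.mem_compl, Finset.mem_filter, Finset.mem_univ, true_and,
        not_forall] at hw
      obtain ⟨v, hv, hvr⟩ := hw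
      rcases v with x | x
      · exact ⟨x, hv⟩
      · simp at hvr
    choose g hg using key
    have hinj : Function.Injective g := by
      intro a b hab
      by_contra hne'
      have hdis := hdisj (fun h => hne' (Subtype.ext h))
      exact Set.disjoint_left.mp hdis (hg a) (hab ▸ hg b)
    calc Sᶜ.card = Fintype.card {w // w ∈ Sᶜ} := (Fintype.card_coe _).symm
      _ ≤ Fintype.card (Fin γ) := Fintype.card_le_of_injective g hinj
      _ = γ := Fintype.card_fin γ
  have hcard : Fintype.card W - γ ≤ S.card := by
    have := Finset.card_compl_add_card S
    omega
  -- S.card ≤ indepNum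
  have hle : S.card ≤ H.indepNumFin := by
    apply le_csSup
    · refine ⟨Fintype.card W, ?_⟩
      rintro m ⟨s, rfl, -⟩
      simpa using Finset.card_le_univ s
    · exact ⟨S, rfl, hindep⟩
  omega
end

section
/- Let $G$ be a graph that is the join of a clique $L$ of size $\gamma \geq 1$ with an $(n-\gamma)$-vertex graph of maximum degree at most $\alpha - 1$. Then the spectral radius $\rho = \rho(G)$ satisfies $(\rho - \gamma + 1)(\rho - \alpha) \leq \gamma(n-\gamma)$, hence $\rho \leq \sqrt{\gamma n} + \frac{\alpha + \gamma - 1}{2} + O(1/\sqrt{n})$. -/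
open Matrix Finset

section Helpers
variable {V : Type*} [Fintype V] [DecidableEq V]

private lemma eigenSet_eq' (A : Matrix V V ℝ) (hA : A.IsHermitian) :
    {μ : ℝ | ∃ x : V → ℝ, x ≠ 0 ∧ A.mulVec x = μ • x} = Set.range hA.eigenvalues := by
  have hsymm : Aᵀ = A := by simpa [Matrix.IsSymm] using hA
  ext μ
  constructor
  · rintro ⟨x, hx, hAx⟩
    by_contra hμ
    apply hx
    have hco : ∀ i, ⇑(hA.eigenvectorBasis i) ⬝ᵥ x = 0 := by
      intro i
      have h1 : ⇑(hA.eigenvectorBasis i) ⬝ᵥ (A *ᵥ x)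
          = (A *ᵥ ⇑(hA.eigenvectorBasis i)) ⬝ᵥ x := by
        rw [Matrix.dotProduct_mulVec, ← Matrix.mulVec_transpose, hsymm]
      rw [hAx, hA.mulVec_eigenvectorBasis] at h1
      simp only [dotProduct_smul, smul_dotProduct, smul_eq_mul] at h1
      have hne : μ - hA.eigenvalues i ≠ 0 :=
        sub_ne_zero.mpr (fun h => hμ ⟨i, h.symm⟩)
      have h2 : (μ - hA.eigenvalues i) * (⇑(hA.eigenvectorBasis i) ⬝ᵥ x) = 0 := by
        ring_nf; linarith [h1]
      rcases mul_eq_zero.mp h2 with h | h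
      · exact absurd h hne
      · exact h
    have h0 : hA.eigenvectorBasis.repr (WithLp.toLp 2 x : EuclideanSpace ℝ V) = 0 := by
      ext i
      rw [OrthonormalBasis.repr_apply_apply]
      rw [show (inner ℝ (hA.eigenvectorBasis i) (WithLp.toLp 2 x : EuclideanSpace ℝ V) : ℝ)
          = ⇑(hA.eigenvectorBasis i) ⬝ᵥ x by
        simp [PiLp.inner_apply, dotProduct, RCLike.inner_apply, mul_comm]]
      simp [hco i]
    have hx0 : (WithLp.toLp 2 x : EuclideanSpace ℝ V) = 0 :=
      (map_eq_zero_iff _ hA.eigenvectorBasis.repr.injective).mp h0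
    simpa using congrArg WithLp.ofLp hx0
  · rintro ⟨i, rfl⟩
    exact ⟨hA.eigenvectorBasis i, by simpa using hA.eigenvectorBasis.orthonormal.ne_zero i,
      hA.mulVec_eigenvectorBasis i⟩

private lemma rayleigh_le' (A : Matrix V V ℝ) (hA : A.IsHermitian) (ρ : ℝ)
    (hρ : ∀ i, hA.eigenvalues i ≤ ρ) (x : V → ℝ) :
    x ⬝ᵥ (A *ᵥ x) ≤ ρ * (x ⬝ᵥ x) := by
  have hsymm : Aᵀ = A := by simpa [Matrix.IsSymm] using hA
  have hdot : ∀ u v : EuclideanSpace ℝ V, (inner ℝ u v : ℝ) = (u : V → ℝ) ⬝ᵥ (v : V → ℝ) := by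
    intros; simp [PiLp.inner_apply, dotProduct, RCLike.inner_apply, mul_comm]
  set e := hA.eigenvectorBasis with he
  let y : EuclideanSpace ℝ V := WithLp.toLp 2 x
  let z : EuclideanSpace ℝ V := WithLp.toLp 2 (A *ᵥ x)
  have hAe : ∀ i, (inner ℝ (e i) z : ℝ) = hA.eigenvalues i * (inner ℝ (e i) y : ℝ) := by
    intro i
    rw [hdot, hdot]
    show ⇑(e i) ⬝ᵥ (A *ᵥ x) = hA.eigenvalues i * (⇑(e i) ⬝ᵥ x)
    rw [Matrix.dotProduct_mulVec, ← Matrix.mulVec_transpose, hsymm, hA.mulVec_eigenvectorBasis]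
    simp [smul_dotProduct, he]
  have h1 : x ⬝ᵥ (A *ᵥ x) = ∑ i, hA.eigenvalues i * (inner ℝ (e i) y : ℝ)^2 := by
    rw [show x ⬝ᵥ (A *ᵥ x) = (inner ℝ y z : ℝ) from (hdot y z).symm]
    rw [← e.sum_inner_mul_inner y z]
    refine Finset.sum_congr rfl fun i _ => ?_
    rw [hAe i, real_inner_comm y (e i)]
    ring
  have h2 : x ⬝ᵥ x = ∑ i, (inner ℝ (e i) y : ℝ)^2 := by
    rw [show x ⬝ᵥ x = (inner ℝ y y : ℝ) from (hdot y y).symm]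
    rw [← e.sum_inner_mul_inner y y]
    refine Finset.sum_congr rfl fun i _ => ?_
    rw [real_inner_comm y (e i)]
    ring
  rw [h1, h2, Finset.mul_sum]
  exact Finset.sum_le_sum fun i _ => mul_le_mul_of_nonneg_right (hρ i) (sq_nonneg _)

end Helpers

/-- The spectral radius of a finite graph: the largest eigenvalue of its adjacency
matrix (as the supremum of the set of real eigenvalues). -/
noncomputable def SimpleGraph.specRad {V : Type*} [Fintype V] [DecidableEq V]
    (G : SimpleGraph V) : ℝ :=
  letI : DecidableRel G.Adj := Classical.decRel _
  sSup {μ : ℝ | ∃ x : V → ℝ, x ≠ 0 ∧ (G.adjMatrix ℝ).mulVec x = μ • x}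

set_option maxHeartbeats 1600000 in
/-- If `G` is the join of a clique `L` of size `γ ≥ 1` with a graph on
the remaining `n - γ` vertices of maximum degree at most `α - 1`, then
`(ρ - γ + 1)(ρ - α) ≤ γ(n - γ)` for `ρ = ρ(G)`. -/
theorem specRad_join_bound {V : Type*} [Fintype V] [DecidableEq V]
    (G : SimpleGraph V) [DecidableRel G.Adj] (L : Finset V) (γ α : ℕ)
    (hγ : 1 ≤ γ) (hα : 1 ≤ α) (hL : L.card = γ)
    (hdom : ∀ u ∈ L, ∀ v : V, v ≠ u → G.Adj u v)
    (hdeg : ∀ v ∉ L, ((G.neighborFinset v).filter fun w => w ∉ L).card ≤ α - 1) :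
    (G.specRad - (γ : ℝ) + 1) * (G.specRad - (α : ℝ))
      ≤ (γ : ℝ) * ((Fintype.card V : ℝ) - (γ : ℝ)) := by
  classical
  set A : Matrix V V ℝ := G.adjMatrix ℝ with hAdef
  have hA : A.IsHermitian := by
    have := G.isSymm_adjMatrix (α := ℝ)
    rw [Matrix.IsHermitian]
    rw [Matrix.IsSymm] at this
    ext i j
    have := congrFun (congrFun this i) j
    simpa [hAdef] using this
  -- the graph is nonempty
  have hLne : L.Nonempty := Finset.card_pos.mp (hL ▸ hγ)
  haveI : Nonempty V := ⟨hLne.choose⟩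
  -- identify specRad with the sup over our eigenvalue set
  set S : Set ℝ := {μ : ℝ | ∃ x : V → ℝ, x ≠ 0 ∧ A.mulVec x = μ • x} with hSdef
  set ρ : ℝ := G.specRad with hρdef
  have hspec : ρ = sSup S := by
    rw [hρdef]
    unfold SimpleGraph.specRad
    congr!
  have hSeq : S = Set.range hA.eigenvalues := eigenSet_eq' A hA
  have hSne : S.Nonempty := by rw [hSeq]; exact Set.range_nonempty _
  have hSfin : S.Finite := by rw [hSeq]; exact Set.finite_range _
  have hmem : ρ ∈ S := by rw [hspec]; exact hSne.csSup_mem hSfin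
  have hub : ∀ μ ∈ S, μ ≤ ρ := by
    intro μ hμ
    rw [hspec]
    exact le_csSup hSfin.bddAbove hμ
  have hργ : (γ : ℝ) - 1 ≤ ρ := by
    -- Rayleigh with the indicator of L
    set x : V → ℝ := fun v => if v ∈ L then 1 else 0 with hxdef
    have hray := rayleigh_le' A hA ρ (fun i => hub _ (hSeq ▸ Set.mem_range_self i)) x
    have hxx : x ⬝ᵥ x = (γ : ℝ) := by
      simp [hxdef, dotProduct, ite_and, hL]
    have hclique : ∀ u ∈ L, ∑ v ∈ L, A u v = (γ : ℝ) - 1 := by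
      intro u hu
      have hfil : L.filter (G.Adj u) = L.erase u := by
        ext v
        simp only [Finset.mem_filter, Finset.mem_erase]
        constructor
        · rintro ⟨hv, hadj⟩; exact ⟨fun h => G.irrefl (h ▸ hadj), hv⟩
        · rintro ⟨hne, hv⟩; exact ⟨hv, hdom u hu v hne⟩
      have : ∑ v ∈ L, A u v = ((L.filter (G.Adj u)).card : ℝ) := by
        simp [hAdef, SimpleGraph.adjMatrix_apply, Finset.sum_boole]
      rw [this, hfil, Finset.card_erase_of_mem hu, hL]
      have : (1:ℕ) ≤ γ := hγ
      push_cast [Nat.cast_sub this]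
      ring
    have hxAx : x ⬝ᵥ (A *ᵥ x) = (γ : ℝ) * ((γ : ℝ) - 1) := by
      have step1 : x ⬝ᵥ (A *ᵥ x) = ∑ u ∈ L, ∑ v ∈ L, A u v := by
        simp only [dotProduct, Matrix.mulVec, hxdef, ite_mul, one_mul, zero_mul,
          mul_ite, mul_one, mul_zero, Finset.sum_ite_mem, Finset.univ_inter]
      rw [step1, Finset.sum_congr rfl hclique, Finset.sum_const, hL, nsmul_eq_mul]
    rw [hxAx, hxx] at hray
    have hγpos : (0:ℝ) < (γ:ℝ) := by exact_mod_cast hγ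
    nlinarith [hray]
  have hρ0 : 0 ≤ ρ := by
    have : (1:ℝ) ≤ (γ:ℝ) := by exact_mod_cast hγ
    linarith
  have hnγ : (γ : ℝ) ≤ (Fintype.card V : ℝ) := by
    exact_mod_cast hL ▸ Finset.card_le_univ L
  have hRHS0 : 0 ≤ (γ : ℝ) * ((Fintype.card V : ℝ) - (γ : ℝ)) := by
    have : (0:ℝ) ≤ (γ:ℝ) := by positivity
    nlinarith
  by_cases hcase : ρ ≤ (α : ℝ)
  · have h1 : 0 ≤ ρ - (γ:ℝ) + 1 := by linarith
    have h2 : ρ - (α:ℝ) ≤ 0 := by linarith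
    nlinarith
  push_neg at hcase
  -- eigenvector analysis
  obtain ⟨x, hx0, hAx⟩ := hmem
  set φ : V → ℝ := fun v => |x v| with hφdef
  have hφ0 : ∀ v, 0 ≤ φ v := fun v => abs_nonneg _
  have hAentry : ∀ u v, A u v = if G.Adj u v then 1 else 0 := by
    intro u v; simp [hAdef]
  have hA0 : ∀ u v, 0 ≤ A u v := by
    intro u v; rw [hAentry]; split <;> norm_num
  have hA1 : ∀ u v, A u v ≤ 1 := by
    intro u v; rw [hAentry]; split <;> norm_num
  have key : ∀ w, ρ * φ w ≤ ∑ v, A w v * φ v := by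
    intro w
    have h := congrFun hAx w
    have heq : ρ * φ w = |∑ v, A w v * x v| := by
      rw [show ∑ v, A w v * x v = (A *ᵥ x) w from rfl, h]
      simp only [Pi.smul_apply, smul_eq_mul, abs_mul, hφdef, abs_of_nonneg hρ0]
    rw [heq]
    refine (Finset.abs_sum_le_sum_abs _ _).trans (le_of_eq ?_)
    refine Finset.sum_congr rfl fun v _ => ?_
    rw [abs_mul, abs_of_nonneg (hA0 w v)]
  -- maximum over L
  obtain ⟨u0, hu0L, hu0⟩ := Finset.exists_mem_eq_sup' hLne φ
  set a : ℝ := L.sup' hLne φ with hadef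
  have haL : ∀ v ∈ L, φ v ≤ a := fun v hv => Finset.le_sup' φ hv
  have ha0 : 0 ≤ a := hu0 ▸ hφ0 u0
  have hsumL_u0 : ∑ v ∈ L, A u0 v * φ v ≤ ((γ:ℝ) - 1) * a := by
    have step : ∑ v ∈ L, A u0 v * φ v ≤ ∑ v ∈ L, A u0 v * a := by
      refine Finset.sum_le_sum fun v hv => mul_le_mul_of_nonneg_left (haL v hv) (hA0 u0 v)
    refine step.trans (le_of_eq ?_)
    rw [← Finset.sum_mul]
    congr 1
    -- ∑ v ∈ L, A u0 v = γ - 1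
    have hfil : L.filter (G.Adj u0) = L.erase u0 := by
      ext v
      simp only [Finset.mem_filter, Finset.mem_erase]
      constructor
      · rintro ⟨hv, hadj⟩; exact ⟨fun h => G.irrefl (h ▸ hadj), hv⟩
      · rintro ⟨hne, hv⟩; exact ⟨hv, hdom u0 hu0L v hne⟩
    have : ∑ v ∈ L, A u0 v = ((L.filter (G.Adj u0)).card : ℝ) := by
      simp [hAdef, SimpleGraph.adjMatrix_apply, Finset.sum_boole]
    rw [this, hfil, Finset.card_erase_of_mem hu0L, hL, Nat.cast_sub hγ]
    simp
  rcases Finset.eq_empty_or_nonempty Lᶜ with hLc | hLc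
  · -- L is everything: n = γ and ρ = γ - 1
    have huniv : ∀ v : V, v ∈ L := by
      intro v
      by_contra hv
      exact Finset.eq_empty_iff_forall_notMem.mp hLc v (Finset.mem_compl.mpr hv)
    have hapos : 0 < a := by
      obtain ⟨v, hv⟩ := Function.ne_iff.mp hx0
      have : 0 < φ v := abs_pos.mpr hv
      exact lt_of_lt_of_le this (haL v (huniv v))
    have hsum : ∑ v, A u0 v * φ v = ∑ v ∈ L, A u0 v * φ v := by
      refine (Finset.sum_subset (Finset.subset_univ L) ?_).symm
      intro v _ hv; exact absurd (huniv v) hv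
    have hk := key u0
    rw [hsum] at hk
    rw [← hu0] at hk
    have hρle : ρ ≤ (γ:ℝ) - 1 := by nlinarith [hsumL_u0]
    have : ρ - (γ:ℝ) + 1 = 0 := by linarith
    rw [this, zero_mul]
    exact hRHS0
  · -- the outside is nonempty
    obtain ⟨w0, hw0c, hw0⟩ := Finset.exists_mem_eq_sup' hLc φ
    set M : ℝ := Lᶜ.sup' hLc φ with hMdef
    have hMc : ∀ v ∉ L, φ v ≤ M := fun v hv => Finset.le_sup' φ (Finset.mem_compl.mpr hv)
    have hM0 : 0 ≤ M := hw0 ▸ hφ0 w0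
    have hw0L : w0 ∉ L := Finset.mem_compl.mp hw0c
    have hcardc : ((Lᶜ.card : ℝ)) = (Fintype.card V : ℝ) - (γ:ℝ) := by
      rw [Finset.card_compl, hL, Nat.cast_sub (hL ▸ Finset.card_le_univ L)]
    -- inequality (1) at u0
    have h1 : ρ * a ≤ ((γ:ℝ) - 1) * a + ((Fintype.card V : ℝ) - (γ:ℝ)) * M := by
      have hk := key u0
      rw [← hu0] at hk
      have hsplit : ∑ v, A u0 v * φ v = ∑ v ∈ L, A u0 v * φ v + ∑ v ∈ Lᶜ, A u0 v * φ v :=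
        (Finset.sum_add_sum_compl L _).symm
      have hsumc : ∑ v ∈ Lᶜ, A u0 v * φ v ≤ ((Fintype.card V : ℝ) - (γ:ℝ)) * M := by
        have step : ∑ v ∈ Lᶜ, A u0 v * φ v ≤ ∑ _v ∈ Lᶜ, M := by
          refine Finset.sum_le_sum fun v hv => ?_
          calc A u0 v * φ v ≤ 1 * φ v :=
                mul_le_mul_of_nonneg_right (hA1 u0 v) (hφ0 v)
            _ = φ v := one_mul _
            _ ≤ M := hMc v (Finset.mem_compl.mp hv)
        rw [Finset.sum_const, nsmul_eq_mul, hcardc] at step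
        exact step
      rw [hsplit] at hk
      linarith [hsumL_u0, hsumc]
    -- inequality (2) at w0
    have h2 : ρ * M ≤ (γ:ℝ) * a + ((α:ℝ) - 1) * M := by
      have hk := key w0
      rw [← hw0] at hk
      have hsplit : ∑ v, A w0 v * φ v = ∑ v ∈ L, A w0 v * φ v + ∑ v ∈ Lᶜ, A w0 v * φ v :=
        (Finset.sum_add_sum_compl L _).symm
      have hsumL : ∑ v ∈ L, A w0 v * φ v ≤ (γ:ℝ) * a := by
        have step : ∑ v ∈ L, A w0 v * φ v ≤ ∑ _v ∈ L, a := by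
          refine Finset.sum_le_sum fun v hv => ?_
          calc A w0 v * φ v ≤ 1 * φ v :=
                mul_le_mul_of_nonneg_right (hA1 w0 v) (hφ0 v)
            _ = φ v := one_mul _
            _ ≤ a := haL v hv
        rw [Finset.sum_const, nsmul_eq_mul, hL] at step
        exact step
      have hsumc : ∑ v ∈ Lᶜ, A w0 v * φ v ≤ ((α:ℝ) - 1) * M := by
        have hfil : ∑ v ∈ Lᶜ, A w0 v * φ v = ∑ v ∈ Lᶜ.filter (G.Adj w0), A w0 v * φ v := by
          refine (Finset.sum_filter_of_ne ?_).symm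
          intro v _ hne
          by_contra hadj
          apply hne
          rw [hAentry, if_neg hadj, zero_mul]
        have hcard : (Lᶜ.filter (G.Adj w0)).card ≤ α - 1 := by
          have : Lᶜ.filter (G.Adj w0) = (G.neighborFinset w0).filter (fun w => w ∉ L) := by
            ext v
            simp only [Finset.mem_filter, Finset.mem_compl, SimpleGraph.mem_neighborFinset]
            tauto
          rw [this]
          exact hdeg w0 hw0L
        have hcardR : ((Lᶜ.filter (G.Adj w0)).card : ℝ) ≤ (α:ℝ) - 1 := by
          calc ((Lᶜ.filter (G.Adj w0)).card : ℝ) ≤ ((α - 1 : ℕ) : ℝ) := by exact_mod_cast hcard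
            _ = (α:ℝ) - 1 := by rw [Nat.cast_sub hα]; simp
        rw [hfil]
        have step : ∑ v ∈ Lᶜ.filter (G.Adj w0), A w0 v * φ v
            ≤ ∑ _v ∈ Lᶜ.filter (G.Adj w0), M := by
          refine Finset.sum_le_sum fun v hv => ?_
          have hvL : v ∉ L := Finset.mem_compl.mp (Finset.mem_of_mem_filter v hv)
          calc A w0 v * φ v ≤ 1 * φ v :=
                mul_le_mul_of_nonneg_right (hA1 w0 v) (hφ0 v)
            _ = φ v := one_mul _
            _ ≤ M := hMc v hvL
        rw [Finset.sum_const, nsmul_eq_mul] at step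
        exact step.trans (mul_le_mul_of_nonneg_right hcardR hM0)
      rw [hsplit] at hk
      linarith [hsumL, hsumc]
    -- conclude
    by_cases hMpos : 0 < M
    · have hapos : 0 < a := by nlinarith [h2]
      have e1 : (ρ - (γ:ℝ) + 1) * a ≤ ((Fintype.card V : ℝ) - (γ:ℝ)) * M := by nlinarith [h1]
      have e2 : (ρ - (α:ℝ) + 1) * M ≤ (γ:ℝ) * a := by nlinarith [h2]
      have e3 : ((ρ - (γ:ℝ) + 1) * a) * ((ρ - (α:ℝ) + 1) * M)
          ≤ (((Fintype.card V : ℝ) - (γ:ℝ)) * M) * ((γ:ℝ) * a) := by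
        refine mul_le_mul e1 e2 ?_ ?_
        · exact mul_nonneg (by linarith) hM0
        · exact mul_nonneg (by linarith) hM0
      have haM : 0 < a * M := mul_pos hapos hMpos
      have e4 : (ρ - (γ:ℝ) + 1) * (ρ - (α:ℝ) + 1)
          ≤ (γ:ℝ) * ((Fintype.card V : ℝ) - (γ:ℝ)) := by
        refine (mul_le_mul_iff_of_pos_right haM).mp ?_
        calc (ρ - (γ:ℝ) + 1) * (ρ - (α:ℝ) + 1) * (a * M)
            = ((ρ - (γ:ℝ) + 1) * a) * ((ρ - (α:ℝ) + 1) * M) := by ring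
          _ ≤ (((Fintype.card V : ℝ) - (γ:ℝ)) * M) * ((γ:ℝ) * a) := e3
          _ = (γ:ℝ) * ((Fintype.card V : ℝ) - (γ:ℝ)) * (a * M) := by ring
      have e5 : (ρ - (γ:ℝ) + 1) * (ρ - (α:ℝ))
          ≤ (ρ - (γ:ℝ) + 1) * (ρ - (α:ℝ) + 1) :=
        mul_le_mul_of_nonneg_left (by linarith) (by linarith)
      linarith [e4, e5]
    · have hM : M = 0 := le_antisymm (not_lt.mp hMpos) hM0
      have hapos : 0 < a := by
        obtain ⟨v, hv⟩ := Function.ne_iff.mp hx0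
        have hφv : 0 < φ v := abs_pos.mpr hv
        by_cases hvL : v ∈ L
        · exact lt_of_lt_of_le hφv (haL v hvL)
        · exact absurd (le_antisymm ((hMc v hvL).trans hM.le) (hφ0 v)) (ne_of_gt hφv)
      have hρle : ρ ≤ (γ:ℝ) - 1 := by nlinarith [h1, hM]
      have : ρ - (γ:ℝ) + 1 = 0 := by linarith
      rw [this, zero_mul]
      exact hRHS0
end

section
/- Let $s_1 \geq 2$ and let $G$ be a connected $(s_1-1)$-regular graph with no $K_{1,s_1}$ minor, where $s_1 \neq 3$. Then either $G \cong K_{s_1}$, or $s_1$ is odd and $G$ is the complement of a perfect matching on $s_1 + 1$ vertices. -/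
/-- The complement of a perfect matching on `2m` vertices: vertices `2i` and `2i+1` are
matched, and two vertices are adjacent iff they belong to different matched pairs. -/
def cpm (m : ℕ) : SimpleGraph (Fin (2 * m)) where
  Adj a b := (a : ℕ) / 2 ≠ (b : ℕ) / 2
  symm := ⟨fun _ _ h => h.symm⟩
  loopless := ⟨fun _ h => h rfl⟩

section AuxiliaryLemmas
open Finset
set_option linter.unusedSectionVars false
set_option maxHeartbeats 1000000

universe v

lemma pair_equiv (n : ℕ) : ∀ (W : Type v) [Fintype W] [DecidableEq W] (σ : W → W),
    (∀ x, σ x ≠ x) → (∀ x, σ (σ x) = x) → Fintype.card W = n →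
    ∃ k, n = 2 * k ∧ ∃ e : W ≃ Fin n, ∀ x, (e x : ℕ) / 2 = (e (σ x) : ℕ) / 2 := by
  induction n using Nat.strong_induction_on with
  | _ n ih =>
    intro W _ _ σ h1 h2 hcard
    rcases Nat.eq_zero_or_pos n with rfl | hpos
    · refine ⟨0, rfl, ?_⟩
      haveI : IsEmpty W := Fintype.card_eq_zero_iff.mp hcard
      exact ⟨Equiv.equivOfIsEmpty W (Fin 0), fun x => isEmptyElim x⟩
    haveI : Nonempty W := Fintype.card_pos_iff.mp (by omega)
    obtain ⟨v₀⟩ := ‹Nonempty W›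
    set p := σ v₀ with hp
    have hpv : p ≠ v₀ := h1 v₀
    have hn2 : 2 ≤ n := by
      have hsub : ({v₀, p} : Finset W) ⊆ univ := subset_univ _
      have h2' : ({v₀, p} : Finset W).card = 2 := card_pair hpv.symm
      have := card_le_card hsub
      rw [h2', card_univ, hcard] at this
      exact this
    set P : W → Prop := fun x => x ≠ v₀ ∧ x ≠ p with hP
    haveI : DecidablePred P := fun x => instDecidableAnd
    have hcard' : Fintype.card {x // P x} = n - 2 := by
      rw [Fintype.card_subtype]
      have hfe : univ.filter P = univ \ {v₀, p} := by
        ext x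
        simp [hP, not_or]
      rw [hfe, card_sdiff_of_subset (subset_univ _), card_pair hpv.symm, card_univ, hcard]
    have hσ1 : ∀ x : W, P x → P (σ x) := by
      rintro x ⟨hx1, hx2⟩
      constructor
      · intro h
        exact hx2 (by rw [← h2 x, h, hp])
      · intro h
        apply hx1
        have := congrArg σ h
        rwa [h2 x, hp, h2 v₀] at this
    let σ' : {x // P x} → {x // P x} := fun x => ⟨σ x.1, hσ1 x.1 x.2⟩
    have h1' : ∀ x : {x // P x}, σ' x ≠ x := fun x h => h1 x.1 (congrArg Subtype.val h)
    have h2' : ∀ x : {x // P x}, σ' (σ' x) = x := fun x => Subtype.ext (h2 x.1)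
    obtain ⟨k', hk', e', he'⟩ := ih (n - 2) (by omega) {x // P x} σ' h1' h2' hcard'
    refine ⟨k' + 1, by omega, ?_⟩
    have hbnd : ∀ (x : {x // P x}), (e' x : ℕ) < n - 2 := fun x => (e' x).isLt
    let f : W → Fin n := fun x =>
      if hx : x = v₀ then ⟨n - 2, by omega⟩
      else if hx2 : x = p then ⟨n - 1, by omega⟩
      else ⟨(e' ⟨x, hx, hx2⟩ : ℕ), by have := hbnd ⟨x, hx, hx2⟩; omega⟩
    have hfv₀ : (f v₀ : ℕ) = n - 2 := by simp [f]
    have hfp : (f p : ℕ) = n - 1 := by simp [f, hpv]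
    have hfo : ∀ (x : W) (hx : x ≠ v₀) (hx2 : x ≠ p), (f x : ℕ) = (e' ⟨x, hx, hx2⟩ : ℕ) := by
      intro x hx hx2
      simp [f, hx, hx2]
    have hinj : Function.Injective f := by
      intro a b hab
      have habv : (f a : ℕ) = (f b : ℕ) := congrArg Fin.val hab
      by_cases ha : a = v₀ <;> by_cases hb : b = v₀
      · rw [ha, hb]
      · by_cases hb2 : b = p
        · rw [ha, hb2] at habv; rw [hfv₀, hfp] at habv; omega
        · rw [ha] at habv; rw [hfv₀, hfo b hb hb2] at habv
          have := hbnd ⟨b, hb, hb2⟩; omega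
      · by_cases ha2 : a = p
        · rw [ha2, hb] at habv; rw [hfp, hfv₀] at habv; omega
        · rw [hb] at habv; rw [hfo a ha ha2, hfv₀] at habv
          have := hbnd ⟨a, ha, ha2⟩; omega
      · by_cases ha2 : a = p <;> by_cases hb2 : b = p
        · rw [ha2, hb2]
        · rw [ha2] at habv; rw [hfp, hfo b hb hb2] at habv
          have := hbnd ⟨b, hb, hb2⟩; omega
        · rw [hb2] at habv; rw [hfo a ha ha2, hfp] at habv
          have := hbnd ⟨a, ha, ha2⟩; omega
        · rw [hfo a ha ha2, hfo b hb hb2] at habv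
          have : (⟨a, ha, ha2⟩ : {x // P x}) = ⟨b, hb, hb2⟩ := e'.injective (Fin.ext habv)
          exact congrArg Subtype.val this
    have hbij : Function.Bijective f :=
      (Fintype.bijective_iff_injective_and_card f).mpr ⟨hinj, by simp [hcard]⟩
    refine ⟨Equiv.ofBijective f hbij, ?_⟩
    intro x
    have hev : ∀ y, ((Equiv.ofBijective f hbij) y : ℕ) = (f y : ℕ) := fun y => rfl
    rw [hev, hev]
    by_cases hx : x = v₀
    · rw [hx, hfv₀, ← hp, hfp]; omega
    by_cases hx2 : x = p
    · have hσp : σ p = v₀ := by rw [hp, h2]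
      rw [hx2, hfp, hσp, hfv₀]; omega
    · have hP1 : σ x ≠ v₀ := (hσ1 x ⟨hx, hx2⟩).1
      have hP2 : σ x ≠ p := (hσ1 x ⟨hx, hx2⟩).2
      rw [hfo x hx hx2, hfo (σ x) hP1 hP2]
      have : (⟨σ x, hP1, hP2⟩ : {x // P x}) = σ' ⟨x, hx, hx2⟩ := rfl
      rw [this]
      exact he' ⟨x, hx, hx2⟩


variable {V : Type*} [Fintype V] [DecidableEq V] (G : SimpleGraph V) [DecidableRel G.Adj]

lemma induce_singleton_connected (x : V) : (G.induce {x}).Connected := by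
  haveI : Nonempty ({x} : Set V) := ⟨⟨x, rfl⟩⟩
  refine ⟨fun a b => ?_⟩
  have : a = b := Subsingleton.elim a b
  exact this ▸ SimpleGraph.Reachable.refl _

def bdF (A : Finset V) : Finset V :=
  univ.filter (fun y => y ∉ A ∧ ∃ x ∈ A, G.Adj x y)

lemma walk_closed {S : Set V} (hcl : ∀ ⦃x y⦄, x ∈ S → G.Adj x y → y ∈ S) :
    ∀ {a b : V} (_ : G.Walk a b), a ∈ S → b ∈ S := by
  intro a b w
  induction w with
  | nil => exact id
  | cons h p ih => exact fun ha => ih (hcl ha h)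

lemma closed_all (hconn : G.Connected) (S : Finset V) {u : V} (hu : u ∈ S)
    (hcl : ∀ ⦃x y⦄, x ∈ S → G.Adj x y → y ∈ S) (v : V) : v ∈ S := by
  obtain ⟨w⟩ := hconn.preconnected u v
  exact walk_closed G (S := (S : Set V)) (by exact_mod_cast hcl) w hu

lemma induce_path_connected (a b c d : V) (h1 : G.Adj a b) (h2 : G.Adj b c) (h3 : G.Adj c d) :
    (G.induce ({a, b, c, d} : Set V)).Connected := by
  set S : Set V := {a, b, c, d} with hS
  have ha : a ∈ S := by simp [hS]
  have hb : b ∈ S := by simp [hS]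
  have hc : c ∈ S := by simp [hS]
  have hd : d ∈ S := by simp [hS]
  haveI : Nonempty S := ⟨⟨a, ha⟩⟩
  have key : ∀ z : S, (G.induce S).Reachable ⟨a, ha⟩ z := by
    rintro ⟨z, hz⟩
    have rab : (G.induce S).Reachable ⟨a, ha⟩ ⟨b, hb⟩ := SimpleGraph.Adj.reachable (by exact h1)
    have rbc : (G.induce S).Reachable ⟨b, hb⟩ ⟨c, hc⟩ := SimpleGraph.Adj.reachable (by exact h2)
    have rcd : (G.induce S).Reachable ⟨c, hc⟩ ⟨d, hd⟩ := SimpleGraph.Adj.reachable (by exact h3)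
    rcases hz with rfl | rfl | rfl | rfl
    · rfl
    · exact rab
    · exact rab.trans rbc
    · exact (rab.trans rbc).trans rcd
  exact ⟨fun x y => (key x).symm.trans (key y)⟩

lemma induce_path3_connected (a b c : V) (h1 : G.Adj a b) (h2 : G.Adj b c) :
    (G.induce ({a, b, c} : Set V)).Connected := by
  set S : Set V := {a, b, c} with hS
  have ha : a ∈ S := by simp [hS]
  have hb : b ∈ S := by simp [hS]
  have hc : c ∈ S := by simp [hS]
  haveI : Nonempty S := ⟨⟨a, ha⟩⟩
  have key : ∀ z : S, (G.induce S).Reachable ⟨a, ha⟩ z := by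
    rintro ⟨z, hz⟩
    have rab : (G.induce S).Reachable ⟨a, ha⟩ ⟨b, hb⟩ := SimpleGraph.Adj.reachable (by exact h1)
    have rbc : (G.induce S).Reachable ⟨b, hb⟩ ⟨c, hc⟩ := SimpleGraph.Adj.reachable (by exact h2)
    rcases hz with rfl | rfl | rfl
    · rfl
    · exact rab
    · exact rab.trans rbc
  exact ⟨fun x y => (key x).symm.trans (key y)⟩

lemma induce_pair_connected (a b : V) (h1 : G.Adj a b) :
    (G.induce ({a, b} : Set V)).Connected := by
  set S : Set V := {a, b} with hS
  have ha : a ∈ S := by simp [hS]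
  have hb : b ∈ S := by simp [hS]
  haveI : Nonempty S := ⟨⟨a, ha⟩⟩
  have key : ∀ z : S, (G.induce S).Reachable ⟨a, ha⟩ z := by
    rintro ⟨z, hz⟩
    rcases hz with rfl | rfl
    · rfl
    · exact SimpleGraph.Adj.reachable (by exact h1)
  exact ⟨fun x y => (key x).symm.trans (key y)⟩

lemma main_card_bound (d : ℕ) (hd : 3 ≤ d) (hconn : G.Connected)
    (hreg : G.IsRegularOfDegree d)
    (hbound : ∀ A : Finset V, A.Nonempty → (G.induce (A : Set V)).Connected →
      (bdF G A).card ≤ d) :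
    Fintype.card V ≤ d + 2 := by
  by_contra hcontra
  have hn : d + 3 ≤ Fintype.card V := by omega
  obtain ⟨u⟩ := hconn.nonempty
  set N := G.neighborFinset u with hN
  have hNcard : N.card = d := hreg u
  have huN : u ∉ N := G.notMem_neighborFinset_self u
  set M := univ \ insert u N with hM
  have hMcard : 2 ≤ M.card := by
    have h1 : (insert u N).card = d + 1 := by rw [card_insert_of_notMem huN, hNcard]
    have h2 : M.card = Fintype.card V - (d + 1) := by
      rw [hM, card_sdiff_of_subset (subset_univ _), h1, card_univ]
    omega
  -- the set of vertices within distance 2 of u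
  set S : Finset V := insert u (N ∪ N.biUnion (fun c => G.neighborFinset c)) with hSdef
  have hS : ∀ w, w ∈ S := by
    by_contra hw
    push_neg at hw
    obtain ⟨w0, hw0⟩ := hw
    have hnc : ¬ ∀ ⦃x y⦄, x ∈ S → G.Adj x y → y ∈ S := fun hcl =>
      hw0 (closed_all G hconn S (mem_insert_self _ _) hcl w0)
    push_neg at hnc
    obtain ⟨x, y, hxS, hxy, hyS⟩ := hnc
    by_cases hxu : x = u
    · exact hyS (mem_insert_of_mem (mem_union_left _
        ((G.mem_neighborFinset u y).mpr (hxu ▸ hxy))))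
    by_cases hxN : x ∈ N
    · exact hyS (by
        refine mem_insert_of_mem (mem_union_right _ (mem_biUnion.mpr ⟨x, hxN, ?_⟩))
        exact (G.mem_neighborFinset x y).mpr hxy)
    -- x is at distance 2: get middle vertex c
    have hxB : x ∈ N.biUnion (fun c => G.neighborFinset c) := by
      rcases mem_insert.mp hxS with h | h
      · exact absurd h hxu
      · rcases mem_union.mp h with h | h
        · exact absurd h hxN
        · exact h
    obtain ⟨c, hcN, hcx⟩ := mem_biUnion.mp hxB
    have huc : G.Adj u c := (G.mem_neighborFinset u c).mp hcN
    have hcxadj : G.Adj c x := (G.mem_neighborFinset c x).mp hcx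
    -- facts about y
    simp only [hSdef, mem_insert, mem_union, mem_biUnion, not_or, not_exists] at hyS
    obtain ⟨hyu, hyN, hyB⟩ := hyS
    push_neg at hyB
    have hyBadj : ∀ z ∈ N, ¬ G.Adj z y := fun z hz hadj =>
      hyB z hz ((G.mem_neighborFinset z y).mpr hadj)
    -- the 4-path {u, c, x, y}
    set A4 : Finset V := {u, c, x, y} with hA4
    have hA4conn : (G.induce (A4 : Set V)).Connected := by
      have : ((A4 : Finset V) : Set V) = ({u, c, x, y} : Set V) := by simp [hA4]
      rw [this]
      exact induce_path_connected G u c x y huc hcxadj hxy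
    have hbd := hbound A4 ⟨u, by simp [hA4]⟩ hA4conn
    set T : Finset V := (N.erase c) ∪ ((G.neighborFinset y).erase x) with hT
    have hTsub : T ⊆ bdF G A4 := by
      intro z hz
      rw [bdF, mem_filter]
      refine ⟨mem_univ _, ?_⟩
      rcases mem_union.mp hz with h | h
      · have hzc := ne_of_mem_erase h
        have hzN := mem_of_mem_erase h
        refine ⟨?_, u, by simp [hA4], (G.mem_neighborFinset u z).mp hzN⟩
        simp only [hA4, mem_insert, mem_singleton, not_or]
        exact ⟨fun h' => huN (h' ▸ hzN), hzc, fun h' => hxN (h' ▸ hzN), fun h' => hyN (h' ▸ hzN)⟩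
      · have hzx := ne_of_mem_erase h
        have hzy := mem_of_mem_erase h
        have hyz : G.Adj y z := (G.mem_neighborFinset y z).mp hzy
        refine ⟨?_, y, by simp [hA4], hyz⟩
        simp only [hA4, mem_insert, mem_singleton, not_or]
        refine ⟨fun h' => hyN ((G.mem_neighborFinset u y).mpr (by rw [← h']; exact hyz.symm)),
          fun h' => hyBadj c hcN (by rw [← h']; exact hyz.symm), hzx,
          fun h' => G.ne_of_adj hyz h'.symm⟩
    have hdisj : Disjoint (N.erase c) ((G.neighborFinset y).erase x) := by
      rw [Finset.disjoint_left]
      intro z hz1 hz2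
      exact hyBadj z (mem_of_mem_erase hz1)
        ((G.mem_neighborFinset y z).mp (mem_of_mem_erase hz2)).symm
    have hdy : (G.neighborFinset y).card = d := hreg y
    have hTcard : T.card = (d - 1) + (d - 1) := by
      rw [hT, card_union_of_disjoint hdisj, card_erase_of_mem hcN,
        card_erase_of_mem ((G.mem_neighborFinset y x).mpr hxy.symm), hNcard, hdy]
    have := card_le_card hTsub
    omega
  -- Claim B
  have hB : ∀ w ∈ M, d - 1 ≤ (N ∩ G.neighborFinset w).card := by
    intro w hw
    have hwfacts : w ≠ u ∧ w ∉ N := by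
      have := (mem_sdiff.mp hw).2
      simp only [mem_insert, not_or] at this
      exact this
    obtain ⟨hwu, hwN⟩ := hwfacts
    have hwS := hS w
    have hwB : w ∈ N.biUnion (fun c => G.neighborFinset c) := by
      rcases mem_insert.mp hwS with h | h
      · exact absurd h hwu
      · rcases mem_union.mp h with h | h
        · exact absurd h hwN
        · exact h
    obtain ⟨c, hcN, hcw⟩ := mem_biUnion.mp hwB
    have huc : G.Adj u c := (G.mem_neighborFinset u c).mp hcN
    have hcwadj : G.Adj c w := (G.mem_neighborFinset c w).mp hcw
    set A3 : Finset V := {u, c, w} with hA3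
    have hA3conn : (G.induce (A3 : Set V)).Connected := by
      have : ((A3 : Finset V) : Set V) = ({u, c, w} : Set V) := by simp [hA3]
      rw [this]
      exact induce_path3_connected G u c w huc hcwadj
    have hbd := hbound A3 ⟨u, by simp [hA3]⟩ hA3conn
    set T : Finset V := (N ∪ G.neighborFinset w).erase c with hT
    have hTsub : T ⊆ bdF G A3 := by
      intro z hz
      have hzc := ne_of_mem_erase hz
      have hzU := mem_of_mem_erase hz
      rw [bdF, mem_filter]
      refine ⟨mem_univ _, ?_⟩
      rcases mem_union.mp hzU with h | h
      · refine ⟨?_, u, by simp [hA3], (G.mem_neighborFinset u z).mp h⟩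
        simp only [hA3, mem_insert, mem_singleton, not_or]
        exact ⟨fun h' => huN (h' ▸ h), hzc, fun h' => hwN (h' ▸ h)⟩
      · have hwz : G.Adj w z := (G.mem_neighborFinset w z).mp h
        refine ⟨?_, w, by simp [hA3], hwz⟩
        simp only [hA3, mem_insert, mem_singleton, not_or]
        refine ⟨fun h' => hwN ((G.mem_neighborFinset u w).mpr (by rw [← h']; exact hwz.symm)), hzc,
          fun h' => G.ne_of_adj hwz h'.symm⟩
    have hcup : c ∈ N ∪ G.neighborFinset w := mem_union_left _ hcN
    have hdw : (G.neighborFinset w).card = d := hreg w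
    have h1 : (N ∪ G.neighborFinset w).card + (N ∩ G.neighborFinset w).card = d + d := by
      rw [card_union_add_card_inter, hNcard, hdw]
    have h2 : T.card = (N ∪ G.neighborFinset w).card - 1 := by
      rw [hT, card_erase_of_mem hcup]
    have h3 : 1 ≤ (N ∪ G.neighborFinset w).card := card_pos.mpr ⟨c, hcup⟩
    have := card_le_card hTsub
    omega
  -- Claim C
  have hC : ∀ x ∈ N, (M ∩ G.neighborFinset x).card ≤ 1 := by
    intro x hxN
    have hux : G.Adj u x := (G.mem_neighborFinset u x).mp hxN
    set A2 : Finset V := {u, x} with hA2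
    have hA2conn : (G.induce (A2 : Set V)).Connected := by
      have : ((A2 : Finset V) : Set V) = ({u, x} : Set V) := by simp [hA2]
      rw [this]
      exact induce_pair_connected G u x hux
    have hbd := hbound A2 ⟨u, by simp [hA2]⟩ hA2conn
    set T : Finset V := (N.erase x) ∪ (M ∩ G.neighborFinset x) with hT
    have hTsub : T ⊆ bdF G A2 := by
      intro z hz
      rw [bdF, mem_filter]
      refine ⟨mem_univ _, ?_⟩
      rcases mem_union.mp hz with h | h
      · have hzx := ne_of_mem_erase h
        have hzN := mem_of_mem_erase h
        refine ⟨?_, u, by simp [hA2], (G.mem_neighborFinset u z).mp hzN⟩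
        simp only [hA2, mem_insert, mem_singleton, not_or]
        exact ⟨fun h' => huN (h' ▸ hzN), hzx⟩
      · obtain ⟨hzM, hznbr⟩ := mem_inter.mp h
        have hzfacts : z ≠ u ∧ z ∉ N := by
          have := (mem_sdiff.mp hzM).2
          simp only [mem_insert, not_or] at this
          exact this
        refine ⟨?_, x, by simp [hA2], (G.mem_neighborFinset x z).mp hznbr⟩
        simp only [hA2, mem_insert, mem_singleton, not_or]
        exact ⟨hzfacts.1, fun h' => hzfacts.2 (h' ▸ hxN)⟩
    have hdisj : Disjoint (N.erase x) (M ∩ G.neighborFinset x) := by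
      rw [Finset.disjoint_left]
      intro z hz1 hz2
      have hzN : z ∈ N := mem_of_mem_erase hz1
      have hzM : z ∈ M := (mem_inter.mp hz2).1
      have := (mem_sdiff.mp hzM).2
      simp only [mem_insert, not_or] at this
      exact this.2 hzN
    have hTcard : T.card = (d - 1) + (M ∩ G.neighborFinset x).card := by
      rw [hT, card_union_of_disjoint hdisj, card_erase_of_mem hxN, hNcard]
    have := card_le_card hTsub
    omega
  -- double counting
  have hfilter1 : ∀ w, N ∩ G.neighborFinset w = N.filter (fun z => G.Adj w z) := by
    intro w
    ext z
    simp [SimpleGraph.mem_neighborFinset]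
  have hfilter2 : ∀ x, M ∩ G.neighborFinset x = M.filter (fun w => G.Adj w x) := by
    intro x
    ext z
    simp only [mem_inter, mem_filter, SimpleGraph.mem_neighborFinset]
    exact and_congr_right fun _ => G.adj_comm x z
  have hsum : ∑ w ∈ M, (N ∩ G.neighborFinset w).card
      = ∑ x ∈ N, (M ∩ G.neighborFinset x).card := by
    simp only [hfilter1, hfilter2, card_filter]
    exact Finset.sum_comm
  have hlow : M.card * (d - 1) ≤ ∑ w ∈ M, (N ∩ G.neighborFinset w).card := by
    have := Finset.card_nsmul_le_sum M (fun w => (N ∩ G.neighborFinset w).card) (d - 1) hB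
    simpa [smul_eq_mul] using this
  have hhigh : ∑ x ∈ N, (M ∩ G.neighborFinset x).card ≤ d := by
    have := Finset.sum_le_card_nsmul N (fun x => (M ∩ G.neighborFinset x).card) 1 hC
    simpa [smul_eq_mul, hNcard] using this
  have hmul : 2 * (d - 1) ≤ M.card * (d - 1) := Nat.mul_le_mul_right _ hMcard
  omega


lemma bdF_card_le (s : ℕ) (hs : 1 ≤ s)
    (hfree : ¬ G.HasMinor (completeBipartiteGraph (Fin 1) (Fin s)))
    (A : Finset V) (hA : A.Nonempty) (hcA : (G.induce (A : Set V)).Connected) :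
    (bdF G A).card ≤ s - 1 := by
  by_contra hlt
  have hcard : s ≤ (bdF G A).card := by omega
  obtain ⟨B, hBsub, hBcard⟩ := Finset.exists_subset_card_eq hcard
  have : Fintype.card B = s := by simpa using hBcard
  let e : (B : Type _) ≃ Fin s := Fintype.equivFinOfCardEq this
  let f : Fin s → V := fun i => (e.symm i : V)
  have hfmem : ∀ i, f i ∈ bdF G A := fun i => hBsub (e.symm i).2
  have hfinj : Function.Injective f := fun i j hij => by
    have : (e.symm i) = (e.symm j) := Subtype.ext hij
    simpa using congrArg e this
  have hfnotA : ∀ i, f i ∉ A := fun i => ((Finset.mem_filter.mp (hfmem i)).2).1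
  have hfadj : ∀ i, ∃ x ∈ A, G.Adj x (f i) := fun i => ((Finset.mem_filter.mp (hfmem i)).2).2
  apply hfree
  refine ⟨Sum.elim (fun _ => (A : Set V)) (fun i => {f i}), ?_, ?_, ?_, ?_⟩
  · rintro (i | i)
    · simpa using hA
    · exact ⟨f i, rfl⟩
  · rintro (i | i)
    · exact hcA
    · exact induce_singleton_connected G (f i)
  · rintro (i | i) (j | j) hne
    · exact absurd (congrArg Sum.inl (Subsingleton.elim i j)) hne
    · simpa using fun h => (hfnotA j) (by exact_mod_cast h)
    · simpa using fun h => (hfnotA i) (by exact_mod_cast h)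
    · have hij : i ≠ j := fun h => hne (congrArg Sum.inr h)
      simp only [Sum.elim_inr]
      exact Set.disjoint_singleton_left.mpr fun h => hij (hfinj h)
  · rintro (i | i) (j | j) hadj
    · simp [completeBipartiteGraph] at hadj
    · obtain ⟨x, hx, hxa⟩ := hfadj j
      exact ⟨x, by exact_mod_cast hx, f j, rfl, hxa⟩
    · obtain ⟨x, hx, hxa⟩ := hfadj i
      exact ⟨f i, rfl, x, by exact_mod_cast hx, hxa.symm⟩
    · simp [completeBipartiteGraph] at hadj


lemma one_regular_card (hconn : G.Connected) (hreg : G.IsRegularOfDegree 1) :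
    Fintype.card V ≤ 2 := by
  obtain ⟨u⟩ := hconn.nonempty
  have hN : (G.neighborFinset u).card = 1 := hreg u
  obtain ⟨v₀, hv₀⟩ := card_eq_one.mp hN
  have huv : G.Adj u v₀ := (G.mem_neighborFinset u v₀).mp (hv₀ ▸ mem_singleton_self v₀)
  have hNv : G.neighborFinset v₀ = {u} := by
    have h1 : (G.neighborFinset v₀).card = 1 := hreg v₀
    obtain ⟨a, ha⟩ := card_eq_one.mp h1
    have hu : u ∈ G.neighborFinset v₀ := (G.mem_neighborFinset v₀ u).mpr huv.symm
    rw [ha] at hu ⊢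
    rw [mem_singleton.mp hu]
  have hcl : ∀ ⦃x y⦄, x ∈ ({u, v₀} : Finset V) → G.Adj x y → y ∈ ({u, v₀} : Finset V) := by
    intro x y hx hxy
    rcases mem_insert.mp hx with rfl | hx
    · have : y ∈ G.neighborFinset x := (G.mem_neighborFinset x y).mpr hxy
      rw [hv₀] at this
      exact mem_insert_of_mem this
    · rw [mem_singleton.mp hx] at hxy
      have : y ∈ G.neighborFinset v₀ := (G.mem_neighborFinset v₀ y).mpr hxy
      rw [hNv] at this
      exact mem_insert.mpr (Or.inl (mem_singleton.mp this))
  have hall : ∀ v : V, v ∈ ({u, v₀} : Finset V) :=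
    closed_all G hconn _ (mem_insert_self u _) hcl
  have : (univ : Finset V) ⊆ {u, v₀} := fun z _ => hall z
  calc Fintype.card V = (univ : Finset V).card := (card_univ).symm
    _ ≤ ({u, v₀} : Finset V).card := card_le_card this
    _ ≤ 2 := card_insert_le _ _ |>.trans (by simp)


lemma complete_case (s : ℕ) (hreg : G.IsRegularOfDegree (s - 1))
    (hn : Fintype.card V = s) :
    Nonempty (G ≃g (⊤ : SimpleGraph (Fin s))) := by
  have hadj : ∀ v w : V, v ≠ w → G.Adj v w := by
    intro v w hvw
    have hsub : G.neighborFinset v ⊆ univ.erase v := by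
      intro z hz
      exact mem_erase.mpr ⟨(G.ne_of_adj ((G.mem_neighborFinset v z).mp hz)).symm, mem_univ z⟩
    have hcards : (univ.erase v).card = s - 1 := by
      rw [card_erase_of_mem (mem_univ v), card_univ, hn]
    have heq : G.neighborFinset v = univ.erase v := by
      apply eq_of_subset_of_card_le hsub
      rw [hcards]
      exact le_of_eq (hreg v).symm
    have : w ∈ G.neighborFinset v := heq ▸ (mem_erase.mpr ⟨hvw.symm, mem_univ w⟩)
    exact (G.mem_neighborFinset v w).mp this
  let e : V ≃ Fin s := Fintype.equivFinOfCardEq hn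
  refine ⟨⟨e, ?_⟩⟩
  intro a b
  simp only [SimpleGraph.top_adj]
  constructor
  · intro h
    exact hadj a b (fun hab => h (congrArg e hab))
  · intro hab h
    exact G.ne_of_adj hab (e.injective h)



lemma match_case (s : ℕ) (hs2 : 2 ≤ s)
    (hreg : G.IsRegularOfDegree (s - 1))
    (hn : Fintype.card V = s + 1) :
    ∃ m : ℕ, s = 2 * m + 1 ∧ Nonempty (G ≃g cpm (m + 1)) := by
  have hTone : ∀ v : V, (univ \ insert v (G.neighborFinset v)).card = 1 := by
    intro v
    rw [card_sdiff_of_subset (subset_univ _), card_insert_of_notMem (G.notMem_neighborFinset_self v),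
      card_univ, hn]
    have := hreg v
    have h1 : G.degree v = s - 1 := hreg v
    have : (G.neighborFinset v).card = s - 1 := h1
    omega
  have hex : ∀ v : V, ∃ w, univ \ insert v (G.neighborFinset v) = {w} :=
    fun v => card_eq_one.mp (hTone v)
  choose σ hσ using hex
  have hmem : ∀ v w : V, w = σ v ↔ (w ≠ v ∧ ¬ G.Adj v w) := by
    intro v w
    rw [← mem_singleton, ← hσ v, mem_sdiff, mem_insert]
    simp [SimpleGraph.mem_neighborFinset, not_or]
  have h1 : ∀ v, σ v ≠ v := fun v => ((hmem v (σ v)).mp rfl).1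
  have hnadj : ∀ v, ¬ G.Adj v (σ v) := fun v => ((hmem v (σ v)).mp rfl).2
  have h2 : ∀ v, σ (σ v) = v := by
    intro v
    exact ((hmem (σ v) v).mpr ⟨(h1 v).symm, fun h => hnadj v h.symm⟩).symm
  obtain ⟨k, hk, e0, he0⟩ := pair_equiv (s + 1) V σ h1 h2 hn
  have hkm : ∃ m, s = 2 * m + 1 := ⟨k - 1, by omega⟩
  obtain ⟨m, hmeq⟩ := hkm
  refine ⟨m, hmeq, ?_⟩
  have hcast : s + 1 = 2 * (m + 1) := by omega
  let e : V ≃ Fin (2 * (m + 1)) := e0.trans (finCongr hcast)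
  have hecast : ∀ v : V, (e v : ℕ) = (e0 v : ℕ) := fun v => rfl
  have hadjchar : ∀ a b : V, G.Adj a b ↔ (b ≠ a ∧ b ≠ σ a) := by
    intro a b
    constructor
    · intro hab
      refine ⟨fun h => G.ne_of_adj hab h.symm, fun h => ?_⟩
      exact hnadj a (h ▸ hab)
    · rintro ⟨hba, hbs⟩
      by_contra hnot
      exact hbs ((hmem a b).mpr ⟨hba, hnot⟩)
  have hhalf : ∀ a b : V, ((e0 a : ℕ) / 2 = (e0 b : ℕ) / 2) ↔ (b = a ∨ b = σ a) := by
    intro a b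
    constructor
    · intro h
      by_cases hab : b = a
      · exact Or.inl hab
      right
      have hne1 : (e0 a : ℕ) ≠ (e0 b : ℕ) := by
        intro hh
        exact hab (e0.injective (Fin.ext hh)).symm
      have hne2 : (e0 a : ℕ) ≠ (e0 (σ a) : ℕ) := by
        intro hh
        exact (h1 a) (e0.injective (Fin.ext hh)).symm
      have h3 := he0 a
      have : (e0 b : ℕ) = (e0 (σ a) : ℕ) := by omega
      exact (e0.injective (Fin.ext this)).symm ▸ rfl
    · rintro (rfl | rfl)
      · rfl
      · exact he0 a
  refine ⟨⟨e, ?_⟩⟩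
  intro a b
  show (e a : ℕ) / 2 ≠ (e b : ℕ) / 2 ↔ G.Adj a b
  rw [hecast, hecast]
  rw [hadjchar a b]
  rw [← not_iff_not]
  push_neg
  rw [hhalf a b]
  tauto

end AuxiliaryLemmas

/-- For `s ≥ 2`, `s ≠ 3`, a connected `(s-1)`-regular graph with no
`K_{1,s}` minor is `K_s`, or `s` is odd and it is the complement of a perfect matching
on `s + 1` vertices. -/
theorem regular_K1s_minorFree {V : Type*} [Fintype V] [DecidableEq V]
    (G : SimpleGraph V) [DecidableRel G.Adj] (s : ℕ) (hs2 : 2 ≤ s) (hs3 : s ≠ 3)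
    (hconn : G.Connected) (hreg : G.IsRegularOfDegree (s - 1))
    (hfree : ¬ G.HasMinor (completeBipartiteGraph (Fin 1) (Fin s))) :
    Nonempty (G ≃g (⊤ : SimpleGraph (Fin s))) ∨
      ∃ m : ℕ, s = 2 * m + 1 ∧ Nonempty (G ≃g cpm (m + 1)) := by
  have hbound := bdF_card_le G s (by omega) hfree
  obtain ⟨u⟩ := hconn.nonempty
  have hNcard : (G.neighborFinset u).card = s - 1 := hreg u
  have hns : s ≤ Fintype.card V := by
    have h1 : (insert u (G.neighborFinset u)).card = s := by
      rw [Finset.card_insert_of_notMem (G.notMem_neighborFinset_self u), hNcard]; omega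
    have h2 := Finset.card_le_card (Finset.subset_univ (insert u (G.neighborFinset u)))
    rw [h1, Finset.card_univ] at h2
    exact h2
  have hn_le : Fintype.card V ≤ s + 1 := by
    by_cases hs2' : s = 2
    · subst hs2'
      have := one_regular_card G hconn hreg
      omega
    · have hd3 : 3 ≤ s - 1 := by omega
      have := main_card_bound G (s - 1) hd3 hconn hreg hbound
      omega
  rcases (by omega : Fintype.card V = s ∨ Fintype.card V = s + 1) with hn | hn
  · exact Or.inl (complete_case G s hreg hn)
  · exact Or.inr (match_case G s hs2 hreg hn)
end

section
/- Let $G$ be a graph with a set $L$ of exactly $\gamma$ dominating vertices and suppose $G$ contains $H$ as a minor, where $|V(H)| \geq \gamma$ and the minimum degree of $H$ is at least 1. Then $G - L$ contains $H[S]$ as a minor for some set $S \subseteq V(H)$ of size $|V(H)| - \gamma$. -/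
/-- If `G` has a set `L` of exactly `γ` dominating vertices,
`H` has minimum degree at least `1` and `|V(H)| ≥ γ`, and `G` contains `H` as a minor,
then `G - L` contains `H[S]` as a minor for some `S ⊆ V(H)` with `|S| = |V(H)| - γ`. -/
theorem induced_minor_of_hasMinor {V W : Type*} [Fintype V] [Fintype W] [DecidableEq V]
    [DecidableEq W] (G : SimpleGraph V) (H : SimpleGraph W) [DecidableRel H.Adj]
    (L : Finset V) (γ : ℕ) (hL : L.card = γ) (hγW : γ ≤ Fintype.card W)
    (hdom : ∀ u ∈ L, ∀ v : V, v ≠ u → G.Adj u v)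
    (hδ : ∀ w : W, 0 < H.degree w)
    (hminor : G.HasMinor H) :
    ∃ S : Finset W, S.card + γ = Fintype.card W ∧
      (G.induce {v : V | v ∉ L}).HasMinor (H.induce (S : Set W)) := by
  classical
  obtain ⟨f, hne, hconn, hdisj, hadj⟩ := hminor
  -- Replace each branch set meeting L by a single vertex of L.
  set g : W → Set V := fun w => if h : (f w ∩ ↑L).Nonempty then {h.choose} else f w with hg
  have hgpos : ∀ w (h : (f w ∩ ↑L).Nonempty), g w = {h.choose} := fun w h => dif_pos h
  have hgneg : ∀ w, ¬(f w ∩ ↑L).Nonempty → g w = f w := fun w h => dif_neg h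
  have hgsub : ∀ w, g w ⊆ f w := by
    intro w
    by_cases h : (f w ∩ ↑L).Nonempty
    · rw [hgpos w h]
      intro x hx
      rw [Set.mem_singleton_iff] at hx
      subst hx
      exact h.choose_spec.1
    · rw [hgneg w h]
  have hgne : ∀ w, (g w).Nonempty := by
    intro w
    by_cases h : (f w ∩ ↑L).Nonempty
    · rw [hgpos w h]
      exact ⟨h.choose, rfl⟩
    · rw [hgneg w h]
      exact hne w
  have hgconn : ∀ w, (G.induce (g w)).Connected := by
    intro w
    by_cases h : (f w ∩ ↑L).Nonempty
    · rw [hgpos w h]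
      haveI : Nonempty ↥({h.choose} : Set V) := ⟨⟨h.choose, rfl⟩⟩
      refine ⟨fun a b => ?_⟩
      have : a = b := by
        apply Subtype.ext
        have ha := a.2
        have hb := b.2
        simp only [Set.mem_singleton_iff] at ha hb
        rw [ha, hb]
      rw [this]
    · rw [hgneg w h]
      exact hconn w
  have hgdisj : Pairwise fun w₁ w₂ => Disjoint (g w₁) (g w₂) :=
    fun w₁ w₂ h => (hdisj h).mono (hgsub _) (hgsub _)
  have hgadj : ∀ ⦃w₁ w₂⦄, H.Adj w₁ w₂ → ∃ v₁ ∈ g w₁, ∃ v₂ ∈ g w₂, G.Adj v₁ v₂ := by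
    intro w₁ w₂ hHadj
    have hne12 : w₁ ≠ w₂ := hHadj.ne
    by_cases h1 : (f w₁ ∩ ↑L).Nonempty
    · obtain ⟨v₂, hv₂⟩ := hgne w₂
      have hu : h1.choose ∈ g w₁ := by rw [hgpos w₁ h1]; rfl
      have hv₂ne : v₂ ≠ h1.choose := by
        intro hEq
        exact (hgdisj hne12).ne_of_mem hu hv₂ hEq.symm
      exact ⟨h1.choose, hu, v₂, hv₂, hdom _ h1.choose_spec.2 v₂ hv₂ne⟩
    · by_cases h2 : (f w₂ ∩ ↑L).Nonempty
      · obtain ⟨v₁, hv₁⟩ := hgne w₁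
        have hu : h2.choose ∈ g w₂ := by rw [hgpos w₂ h2]; rfl
        have hv₁ne : v₁ ≠ h2.choose := by
          intro hEq
          exact (hgdisj hne12).ne_of_mem hv₁ hu hEq
        exact ⟨v₁, hv₁, h2.choose, hu, (hdom _ h2.choose_spec.2 v₁ hv₁ne).symm⟩
      · obtain ⟨v₁, hv₁, v₂, hv₂, hGadj⟩ := hadj hHadj
        refine ⟨v₁, ?_, v₂, ?_, hGadj⟩
        · rw [hgneg w₁ h1]; exact hv₁
        · rw [hgneg w₂ h2]; exact hv₂
  -- The set of vertices of H whose branch set meets L.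
  set T : Finset W := Finset.univ.filter (fun w => (f w ∩ ↑L).Nonempty) with hT
  have hTcard : T.card ≤ γ := by
    rw [← hL]
    apply Finset.card_le_card_of_injOn
      (fun w => if h : (f w ∩ ↑L).Nonempty then h.choose else (hne w).choose)
    · intro w hw
      rw [Finset.mem_coe, hT, Finset.mem_filter] at hw
      simp only [dif_pos hw.2]
      exact hw.2.choose_spec.2
    · intro w₁ hw₁ w₂ hw₂ hEq
      rw [Finset.mem_coe, hT, Finset.mem_filter] at hw₁ hw₂
      simp only [dif_pos hw₁.2, dif_pos hw₂.2] at hEq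
      by_contra hne12
      exact (hdisj hne12).ne_of_mem hw₁.2.choose_spec.1 hw₂.2.choose_spec.1 hEq
  have hScard : Fintype.card W - γ ≤ Tᶜ.card := by
    rw [Finset.card_compl]
    omega
  obtain ⟨S, hSsub, hScard⟩ := Finset.exists_subset_card_eq hScard
  have hSL : ∀ w ∈ S, ∀ v ∈ f w, v ∉ L := by
    intro w hw v hv hvL
    have hwT : w ∉ T := Finset.mem_compl.mp (hSsub hw)
    rw [hT, Finset.mem_filter] at hwT
    push_neg at hwT
    have hmem : v ∈ f w ∩ ↑L := ⟨hv, Finset.mem_coe.mpr hvL⟩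
    rw [hwT (Finset.mem_univ w)] at hmem
    exact hmem
  refine ⟨S, by omega, ?_⟩
  -- Build the model of H[S] in G - L.
  refine ⟨fun w => Subtype.val ⁻¹' f w.1, ?_, ?_, ?_, ?_⟩
  · rintro ⟨w, hw⟩
    obtain ⟨v, hv⟩ := hne w
    exact ⟨⟨v, hSL w hw v hv⟩, hv⟩
  · rintro ⟨w, hw⟩
    have hiso : G.induce (f w) ≃g
        ((G.induce {v : V | v ∉ L}).induce (Subtype.val ⁻¹' f w)) := by
      refine ⟨⟨fun x => ⟨⟨x.1, hSL w hw x.1 x.2⟩, x.2⟩,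
        fun y => ⟨y.1.1, y.2⟩, ?_, ?_⟩, ?_⟩
      · rintro ⟨x, hx⟩; rfl
      · rintro ⟨⟨y, hy⟩, hy'⟩; rfl
      · rintro ⟨x, hx⟩ ⟨y, hy⟩; rfl
    exact hiso.connected_iff.mp (hconn w)
  · rintro ⟨w₁, hw₁⟩ ⟨w₂, hw₂⟩ hne12
    have : w₁ ≠ w₂ := fun h => hne12 (Subtype.ext h)
    exact Disjoint.preimage Subtype.val (hdisj this)
  · rintro ⟨w₁, hw₁⟩ ⟨w₂, hw₂⟩ hHadj
    have hHadj' : H.Adj w₁ w₂ := hHadj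
    obtain ⟨v₁, hv₁, v₂, hv₂, hGadj⟩ := hadj hHadj'
    exact ⟨⟨v₁, hSL w₁ hw₁ v₁ hv₁⟩, hv₁, ⟨v₂, hSL w₂ hw₂ v₂ hv₂⟩, hv₂, hGadj⟩
end
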